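/- Let E be a complex inner product space and let A, B, C be unit vectors in E. Let ε and δ be real numbers with 0 ≤ ε ≤ 1/2 and 0 ≤ δ ≤ 1/2, and suppose |⟨A, B⟩|² = 1 − ε and |⟨A, C⟩|² = 1 − δ. Then |⟨B, C⟩|² ≥ 1 − 2(ε + δ). -/

import Mathlib

private lemma fid_arith (ε δ p q r s t : ℝ)
    (hε0 : 0 ≤ ε) (hε : ε ≤ 1 / 2) (hδ0 : 0 ≤ δ) (hδ : δ ≤ 1 / 2)
    (hp0 : 0 ≤ p) (hq0 : 0 ≤ q) (hr0 : 0 ≤ r) (hs0 : 0 ≤ s) (ht0 : 0 ≤ t)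
    (hp2 : p ^ 2 = 1 - ε) (hq2 : q ^ 2 = 1 - δ) (hr2 : r ^ 2 = ε) (hs2 : s ^ 2 = δ)
    (htge : p * q - r * s ≤ t) : 1 - 2 * (ε + δ) ≤ t ^ 2 := by
  have hsq : (r * s) ^ 2 ≤ (p * q) ^ 2 := by nlinarith
  have hpqrs : r * s ≤ p * q := by
    nlinarith [mul_nonneg hr0 hs0, mul_nonneg hp0 hq0]
  have hpq1 : p * q ≤ 1 := by nlinarith [mul_nonneg hp0 hq0]
  have ht2 : (p * q - r * s) ^ 2 ≤ t ^ 2 := by nlinarith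
  nlinarith [sq_nonneg (r - s), mul_nonneg (mul_nonneg hp0 hq0) (mul_nonneg hr0 hs0),
    mul_nonneg hr0 hs0]

/-- Triangle inequality for fidelity of pure states: if A, B, C are
unit vectors with |⟨A,B⟩|² = 1 − ε and |⟨A,C⟩|² = 1 − δ (ε, δ ∈ [0, 1/2]),
then |⟨B,C⟩|² ≥ 1 − 2(ε + δ). -/
theorem fidelity_triangle_inequality
    {E : Type*} [NormedAddCommGroup E] [InnerProductSpace ℂ E]
    (A B C : E) (hA : ‖A‖ = 1) (hB : ‖B‖ = 1) (hC : ‖C‖ = 1)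
    (ε δ : ℝ) (hε0 : 0 ≤ ε) (hε : ε ≤ 1 / 2) (hδ0 : 0 ≤ δ) (hδ : δ ≤ 1 / 2)
    (hAB : ‖(inner ℂ A B : ℂ)‖ ^ 2 = 1 - ε)
    (hAC : ‖(inner ℂ A C : ℂ)‖ ^ 2 = 1 - δ) :
    ‖(inner ℂ B C : ℂ)‖ ^ 2 ≥ 1 - 2 * (ε + δ) := by
  set a : ℂ := inner ℂ A B with ha
  set b : ℂ := inner ℂ A C with hb
  set B' : E := B - a • A with hB'
  set C' : E := C - b • A with hC'
  have hAA : (inner ℂ A A : ℂ) = 1 := by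
    rw [inner_self_eq_norm_sq_to_K, hA]; norm_num
  have hAB' : (inner ℂ A B' : ℂ) = 0 := by
    simp [hB', inner_sub_right, inner_smul_right, hAA, ha, hA]
  have hAC' : (inner ℂ A C' : ℂ) = 0 := by
    simp [hC', inner_sub_right, inner_smul_right, hAA, hb, hA]
  have hB'A : (inner ℂ B' A : ℂ) = 0 := by
    rw [← inner_conj_symm, hAB']; simp
  -- norms of the orthogonal components
  have hnB' : ‖B'‖ ^ 2 = ε := by
    have h := norm_sub_sq (𝕜 := ℂ) B (a • A)
    rw [inner_smul_right, ← inner_conj_symm, ← ha] at h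
    have h2 : RCLike.re (a * (starRingEnd ℂ) (a : ℂ)) = ‖a‖ ^ 2 := by
      rw [RCLike.mul_conj, ← RCLike.ofReal_pow, RCLike.ofReal_re]
    rw [h2, norm_smul, hA, hB, hAB] at h
    simp only [norm_one, mul_one, one_pow] at h
    rw [← hB'] at h
    nlinarith [h]
  have hnC' : ‖C'‖ ^ 2 = δ := by
    have h := norm_sub_sq (𝕜 := ℂ) C (b • A)
    rw [inner_smul_right, ← inner_conj_symm, ← hb] at h
    have h2 : RCLike.re (b * (starRingEnd ℂ) (b : ℂ)) = ‖b‖ ^ 2 := by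
      rw [RCLike.mul_conj, ← RCLike.ofReal_pow, RCLike.ofReal_re]
    rw [h2, norm_smul, hA, hC, hAC] at h
    simp only [norm_one, mul_one, one_pow] at h
    rw [← hC'] at h
    nlinarith [h]
  -- decomposition of the inner product
  have hBeq : B = a • A + B' := by rw [hB']; abel
  have hCeq : C = b • A + C' := by rw [hC']; abel
  have hBC : (inner ℂ B C : ℂ) = (starRingEnd ℂ) a * b + inner ℂ B' C' := by
    conv_lhs => rw [hBeq, hCeq]
    simp [inner_add_left, inner_add_right, inner_smul_left, inner_smul_right,
      hAA, hAC', hB'A, hA]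
    ring
  -- norm estimates
  have hCS : ‖(inner ℂ B' C' : ℂ)‖ ≤ ‖B'‖ * ‖C'‖ := norm_inner_le_norm B' C'
  have hlow : ‖a‖ * ‖b‖ - ‖B'‖ * ‖C'‖ ≤ ‖(inner ℂ B C : ℂ)‖ := by
    have h1 := norm_sub_norm_le ((starRingEnd ℂ) a * b) (-(inner ℂ B' C' : ℂ))
    rw [sub_neg_eq_add, norm_neg, norm_mul, RCLike.norm_conj] at h1
    rw [hBC]
    linarith
  exact fid_arith ε δ ‖a‖ ‖b‖ ‖B'‖ ‖C'‖ ‖(inner ℂ B C : ℂ)‖ hε0 hε hδ0 hδ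
    (norm_nonneg _) (norm_nonneg _) (norm_nonneg _) (norm_nonneg _) (norm_nonneg _)
    hAB hAC hnB' hnC' hlow
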